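/- Let F be symmetric around 0 with continuous cdf, let the benchmark be the median, and suppose manipulation has zero variable cost and fixed cost k > 0 per unit mass of prices moved. For target P > 0, the minimum cost to make the median of the final distribution equal to P is k·(F(P) - 1/2). -/

import Mathlib

open Set MeasureTheory ProbabilityTheory

lemma stmt14_iio_eq_iic (μ : Measure ℝ) (hatomless : ∀ x : ℝ, μ {x} = 0) (a : ℝ) :
    μ (Iio a) = μ (Iic a) := by
  apply le_antisymm (measure_mono Set.Iio_subset_Iic_self)
  rw [← Set.Iio_union_right]
  calc μ (Iio a ∪ {a}) ≤ μ (Iio a) + μ {a} := measure_union_le _ _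
    _ = μ (Iio a) := by rw [hatomless a, add_zero]

lemma stmt14_half (μ : Measure ℝ) [IsProbabilityMeasure μ]
    (hsym : Measure.map (fun x => -x) μ = μ)
    (hatomless : ∀ x : ℝ, μ {x} = 0) : μ (Iic 0) = 1/2 := by
  have h1 : μ (Iic 0) = μ (Ici 0) := by
    conv_lhs => rw [← hsym]
    rw [Measure.map_apply measurable_neg measurableSet_Iic]
    congr 1
    ext x; simp [neg_le]
  have h3 : μ (Ici 0) = μ (Ioi 0) := by
    apply le_antisymm
    · rw [← Set.Ioi_union_left]
      calc μ (Ioi 0 ∪ {0}) ≤ μ (Ioi 0) + μ {0} := measure_union_le _ _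
        _ = μ (Ioi 0) := by rw [hatomless 0, add_zero]
    · exact measure_mono Set.Ioi_subset_Ici_self
  have h2 : μ (Iic 0) + μ (Ioi 0) = 1 := by
    rw [← Set.compl_Iic]
    simpa using measure_add_measure_compl (μ := μ) measurableSet_Iic
  rw [h3] at h1
  rw [← h1] at h2
  rw [ENNReal.eq_div_iff (by norm_num) (by norm_num), two_mul, h2]

lemma stmt14_mem (μ : Measure ℝ) [IsProbabilityMeasure μ]
    (hsym : Measure.map (fun x => -x) μ = μ)
    (hatomless : ∀ x : ℝ, μ {x} = 0)
    (k P : ℝ) (hP : 0 < P) :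
    ∃ κ : Kernel ℝ ℝ, IsMarkovKernel κ ∧
        (μ.bind κ) (Set.Iio P) ≤ ENNReal.ofReal (1/2) ∧
        ENNReal.ofReal (1/2) ≤ (μ.bind κ) (Set.Iic P) ∧
        k * ((μ (Set.Iic P)).toReal - 1/2) = k * ∫ p, ((κ p) {p}ᶜ).toReal ∂μ := by
  have hIio0 : μ (Iio 0) = 1/2 :=
    (stmt14_iio_eq_iic μ hatomless 0).trans (stmt14_half μ hsym hatomless)
  have hhalf : ENNReal.ofReal (1/2) = 1/2 := by
    rw [ENNReal.ofReal_div_of_pos (by norm_num)]; norm_num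
  refine ⟨Kernel.piecewise (measurableSet_Ico : MeasurableSet (Ico 0 P))
      (Kernel.const ℝ (Measure.dirac P)) (Kernel.deterministic id measurable_id),
    inferInstance, ?_, ?_, ?_⟩
  · rw [Measure.bind_apply measurableSet_Iio (Kernel.measurable _).aemeasurable]
    have : ∀ p, (Kernel.piecewise (measurableSet_Ico : MeasurableSet (Ico 0 P))
        (Kernel.const ℝ (Measure.dirac P)) (Kernel.deterministic id measurable_id)) p (Iio P)
        = (Iio 0).indicator 1 p := by
      intro p
      rw [Kernel.piecewise_apply']
      by_cases h : p ∈ Ico 0 P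
      · simp only [h, if_true, Kernel.const_apply]
        rw [Measure.dirac_apply' _ measurableSet_Iio]
        simp [indicator, not_lt.2 h.1]
      · simp only [h, if_false, Kernel.deterministic_apply]
        rw [Measure.dirac_apply' _ measurableSet_Iio]
        simp only [Set.mem_Ico, not_and, not_lt] at h
        by_cases h0 : p < 0
        · simp [indicator, h0, lt_trans h0 hP]
        · simp [indicator, h0, not_lt.2 (h (not_lt.1 h0))]
    rw [lintegral_congr this, lintegral_indicator_one measurableSet_Iio, hIio0, hhalf]
  · rw [Measure.bind_apply measurableSet_Iic (Kernel.measurable _).aemeasurable]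
    have : ∀ p, (Iic P).indicator 1 p ≤
        (Kernel.piecewise (measurableSet_Ico : MeasurableSet (Ico 0 P))
        (Kernel.const ℝ (Measure.dirac P)) (Kernel.deterministic id measurable_id)) p (Iic P) := by
      intro p
      rw [Kernel.piecewise_apply']
      by_cases h : p ∈ Ico 0 P
      · simp only [h, if_true, Kernel.const_apply]
        rw [Measure.dirac_apply' _ measurableSet_Iic]
        simp only [indicator, Set.mem_Iic, Pi.one_apply]
        split_ifs <;> simp_all
      · simp only [h, if_false, Kernel.deterministic_apply, id]
        rw [Measure.dirac_apply' _ measurableSet_Iic]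
    calc ENNReal.ofReal (1/2) = μ (Iic 0) := by
          rw [hhalf, stmt14_half μ hsym hatomless]
      _ ≤ μ (Iic P) := measure_mono (Set.Iic_subset_Iic.2 hP.le)
      _ = ∫⁻ p, (Iic P).indicator 1 p ∂μ := (lintegral_indicator_one measurableSet_Iic).symm
      _ ≤ _ := lintegral_mono this
  · congr 1
    have heq : ∀ p, (((Kernel.piecewise (measurableSet_Ico : MeasurableSet (Ico 0 P))
        (Kernel.const ℝ (Measure.dirac P)) (Kernel.deterministic id measurable_id)) p)
        {p}ᶜ).toReal = (Ico 0 P).indicator (fun _ => (1:ℝ)) p := by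
      intro p
      rw [Kernel.piecewise_apply']
      by_cases h : p ∈ Ico 0 P
      · simp only [h, if_true, Kernel.const_apply]
        rw [Measure.dirac_apply' _ (measurableSet_singleton p).compl]
        simp [indicator, h, ne_of_gt h.2]
      · simp [h, Kernel.deterministic_apply, indicator]
    rw [integral_congr_ae (Filter.Eventually.of_forall heq),
      integral_indicator_const _ measurableSet_Ico]
    have hdisj : Disjoint (Iio 0) (Ico 0 P) := by
      apply Set.disjoint_left.2; intro x hx hx2; exact absurd hx2.1 (not_le.2 hx)
    have hunion : Iio 0 ∪ Ico 0 P = Iio P := by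
      ext x; simp only [Set.mem_union, Set.mem_Iio, Set.mem_Ico]
      constructor
      · rintro (h | h); exacts [lt_trans h hP, h.2]
      · intro h; by_cases h0 : x < 0; exacts [Or.inl h0, Or.inr ⟨not_lt.1 h0, h⟩]
    have hsum : μ (Iio 0) + μ (Ico 0 P) = μ (Iio P) := by
      rw [← measure_union hdisj measurableSet_Ico, hunion]
    have hfin : μ (Ico 0 P) ≠ ⊤ := (measure_lt_top μ _).ne
    have : (μ (Ico 0 P)).toReal = (μ (Iic P)).toReal - 1/2 := by
      have := congrArg ENNReal.toReal hsum
      rw [ENNReal.toReal_add (measure_lt_top μ _).ne hfin, hIio0,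
        stmt14_iio_eq_iic μ hatomless P] at this
      have h12 : ((1:ENNReal)/2).toReal = 1/2 := by simp
      rw [h12] at this
      linarith
    rw [measureReal_def, this, smul_eq_mul, mul_one]

lemma stmt14_lb (μ : Measure ℝ) [IsProbabilityMeasure μ]
    (hatomless : ∀ x : ℝ, μ {x} = 0)
    (P : ℝ) (κ : Kernel ℝ ℝ) (hκ : IsMarkovKernel κ)
    (h1 : (μ.bind κ) (Iio P) ≤ ENNReal.ofReal (1/2)) :
    (μ (Iic P)).toReal - 1/2 ≤ ∫ p, ((κ p) {p}ᶜ).toReal ∂μ := by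
  haveI := hκ
  have hhalf : ENNReal.ofReal (1/2) = 1/2 := by
    rw [ENNReal.ofReal_div_of_pos (by norm_num)]; norm_num
  rw [hhalf] at h1
  have hms : MeasurableSet {q : ℝ × ℝ | q.2 = q.1} :=
    measurableSet_eq_fun measurable_snd measurable_fst
  have hf : Measurable (fun p => κ p {p}ᶜ) := by
    have := Kernel.measurable_kernel_prodMk_left (κ := κ) hms.compl
    convert this using 2
    rfl
  set I := ∫⁻ p, κ p {p}ᶜ ∂μ with hI
  have hI1 : I ≤ 1 := by
    calc I ≤ ∫⁻ _, 1 ∂μ := lintegral_mono fun p => prob_le_one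
      _ = 1 := by simp
  have hInt : ∫ p, ((κ p) {p}ᶜ).toReal ∂μ = I.toReal := by
    rw [hI, integral_toReal hf.aemeasurable
      (Filter.Eventually.of_forall fun p => lt_of_le_of_lt prob_le_one ENNReal.one_lt_top)]
  have key : μ (Iio P) ≤ I + (μ.bind κ) (Iio P) := by
    rw [Measure.bind_apply measurableSet_Iio (Kernel.measurable _).aemeasurable]
    have step : ∀ p ∈ Iio P, (1 : ENNReal) ≤ κ p {p}ᶜ + κ p (Iio P) := by
      intro p hp
      calc (1 : ENNReal) = κ p Set.univ := (measure_univ).symm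
        _ = κ p {p}ᶜ + κ p {p} := by
          rw [add_comm, measure_add_measure_compl (measurableSet_singleton p)]
        _ ≤ κ p {p}ᶜ + κ p (Iio P) :=
          add_le_add le_rfl (measure_mono (Set.singleton_subset_iff.2 hp))
    calc μ (Iio P) = ∫⁻ _ in Iio P, 1 ∂μ := (setLIntegral_one _).symm
      _ ≤ ∫⁻ p in Iio P, (κ p {p}ᶜ + κ p (Iio P)) ∂μ :=
          setLIntegral_mono (hf.add (Kernel.measurable_coe κ measurableSet_Iio)) step
      _ = (∫⁻ p in Iio P, κ p {p}ᶜ ∂μ) + ∫⁻ p in Iio P, κ p (Iio P) ∂μ :=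
          lintegral_add_left (hf) _
      _ ≤ I + ∫⁻ p, κ p (Iio P) ∂μ :=
          add_le_add (setLIntegral_le_lintegral _ _) (setLIntegral_le_lintegral _ _)
  have key2 : μ (Iio P) ≤ I + 1/2 := key.trans (add_le_add le_rfl h1)
  have hItop : I ≠ ⊤ := (lt_of_le_of_lt hI1 ENNReal.one_lt_top).ne
  have htop : I + 1/2 ≠ ⊤ := ENNReal.add_ne_top.2 ⟨hItop, by norm_num⟩
  have := ENNReal.toReal_mono htop key2
  rw [ENNReal.toReal_add hItop (by norm_num)] at this
  have h12 : ((1:ENNReal)/2).toReal = 1/2 := by simp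
  rw [h12] at this
  rw [← stmt14_iio_eq_iic μ hatomless P, hInt]
  linarith

/-- With zero variable cost and fixed cost `k > 0` per unit mass
moved, for a symmetric atomless distribution `μ` and target `P > 0`, the minimal
cost over Markov-kernel strategies making `P` a median of the final distribution
`μ.bind κ` equals `k * (F P - 1/2)`, where `F P = μ(-∞, P]`. -/
theorem stmt_14 (μ : Measure ℝ) [IsProbabilityMeasure μ]
    (hsym : Measure.map (fun x => -x) μ = μ)
    (hatomless : ∀ x : ℝ, μ {x} = 0)
    (k P : ℝ) (hk : 0 < k) (hP : 0 < P) :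
    sInf {x : ℝ | ∃ κ : Kernel ℝ ℝ, IsMarkovKernel κ ∧
        (μ.bind κ) (Set.Iio P) ≤ ENNReal.ofReal (1/2) ∧
        ENNReal.ofReal (1/2) ≤ (μ.bind κ) (Set.Iic P) ∧
        x = k * ∫ p, ((κ p) {p}ᶜ).toReal ∂μ} =
      k * ((μ (Set.Iic P)).toReal - 1/2) := by
  obtain ⟨κ₀, hκ₀, hio, hic, hcost⟩ := stmt14_mem μ hsym hatomless k P hP
  have hmem : k * ((μ (Set.Iic P)).toReal - 1/2) ∈
      {x : ℝ | ∃ κ : Kernel ℝ ℝ, IsMarkovKernel κ ∧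
        (μ.bind κ) (Set.Iio P) ≤ ENNReal.ofReal (1/2) ∧
        ENNReal.ofReal (1/2) ≤ (μ.bind κ) (Set.Iic P) ∧
        x = k * ∫ p, ((κ p) {p}ᶜ).toReal ∂μ} := ⟨κ₀, hκ₀, hio, hic, hcost⟩
  have hlb : ∀ x ∈ {x : ℝ | ∃ κ : Kernel ℝ ℝ, IsMarkovKernel κ ∧
        (μ.bind κ) (Set.Iio P) ≤ ENNReal.ofReal (1/2) ∧
        ENNReal.ofReal (1/2) ≤ (μ.bind κ) (Set.Iic P) ∧
        x = k * ∫ p, ((κ p) {p}ᶜ).toReal ∂μ},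
      k * ((μ (Set.Iic P)).toReal - 1/2) ≤ x := by
    rintro x ⟨κ, hκ, h1, _, rfl⟩
    exact mul_le_mul_of_nonneg_left (stmt14_lb μ hatomless P κ hκ h1) hk.le
  exact le_antisymm (csInf_le ⟨_, hlb⟩ hmem) (le_csInf ⟨_, hmem⟩ hlb)
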